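/- Let κ ≥ 0 be locally integrable with κ̃(τ) = ∫₀^τ κ(s) ds, and suppose ξ₁, ξ₂ : [0,τ] → (0,∞) are integrable with ∫₀^τ ξ₁ = ∫₀^τ ξ₂ and ξ₁ - ξ₂ nonincreasing with ξ₁(0) ≥ ξ₂(0) (so ξ₁ is more 'backwardated'). If κ̃ is nondecreasing, then the affine leading-order SSR with curve ξ₁ is at most that with curve ξ₂: [∫₀^τ ξ₁]·κ̃(τ)/∫₀^τ ξ₁(s)κ̃(τ-s) ds ≤ [∫₀^τ ξ₂]·κ̃(τ)/∫₀^τ ξ₂(s)κ̃(τ-s) ds, provided ∫₀^τ ξ₁(s)κ̃(τ-s) ds ≥ ∫₀^τ ξ₂(s)κ̃(τ-s) ds follows; equivalently ∫₀^τ (ξ₁(s) - ξ₂(s))·κ̃(τ-s) ds ≥ 0. -/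
import Mathlib


open Real MeasureTheory intervalIntegral

theorem affine_ssr_backwardation_lowers (κ : ℝ → ℝ) (τ : ℝ) (hτ : 0 < τ)
    (hκ_nonneg : ∀ s, 0 < s → 0 ≤ κ s)
    (hκ_loc : LocallyIntegrableOn κ (Set.Ioi 0))
    (κt : ℝ → ℝ) (hκt : κt = fun x => ∫ s in (0:ℝ)..x, κ s)
    (hκt_mono : MonotoneOn κt (Set.Icc 0 τ))
    (ξ1 ξ2 : ℝ → ℝ)
    (hξ1_pos : ∀ s ∈ Set.Icc (0:ℝ) τ, 0 < ξ1 s)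
    (hξ2_pos : ∀ s ∈ Set.Icc (0:ℝ) τ, 0 < ξ2 s)
    (hξ1_int : IntervalIntegrable ξ1 volume 0 τ)
    (hξ2_int : IntervalIntegrable ξ2 volume 0 τ)
    (hprod1 : IntervalIntegrable (fun s => ξ1 s * κt (τ - s)) volume 0 τ)
    (hprod2 : IntervalIntegrable (fun s => ξ2 s * κt (τ - s)) volume 0 τ)
    (heq : (∫ s in (0:ℝ)..τ, ξ1 s) = ∫ s in (0:ℝ)..τ, ξ2 s)
    (hdiff_anti : AntitoneOn (fun s => ξ1 s - ξ2 s) (Set.Icc 0 τ))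
    (h0 : ξ2 0 ≤ ξ1 0)
    (hden2_pos : 0 < ∫ s in (0:ℝ)..τ, ξ2 s * κt (τ - s)) :
    (0 ≤ ∫ s in (0:ℝ)..τ, (ξ1 s - ξ2 s) * κt (τ - s)) ∧
      ((∫ s in (0:ℝ)..τ, ξ1 s) * κt τ) / (∫ s in (0:ℝ)..τ, ξ1 s * κt (τ - s)) ≤
        ((∫ s in (0:ℝ)..τ, ξ2 s) * κt τ) / (∫ s in (0:ℝ)..τ, ξ2 s * κt (τ - s)) := by
  -- the crossing point
  set S : Set ℝ := {s ∈ Set.Icc (0:ℝ) τ | 0 ≤ ξ1 s - ξ2 s} with hS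
  have h0S : (0:ℝ) ∈ S := ⟨⟨le_refl 0, hτ.le⟩, by linarith⟩
  have hSne : S.Nonempty := ⟨0, h0S⟩
  have hSbdd : BddAbove S := ⟨τ, fun x hx => hx.1.2⟩
  set t : ℝ := sSup S with ht
  have ht0 : 0 ≤ t := le_csSup hSbdd h0S
  have htτ : t ≤ τ := csSup_le hSne (fun x hx => hx.1.2)
  have htI : t ∈ Set.Icc (0:ℝ) τ := ⟨ht0, htτ⟩
  -- pointwise inequality
  have hpt : ∀ s ∈ Set.Icc (0:ℝ) τ,
      0 ≤ (ξ1 s - ξ2 s) * (κt (τ - s) - κt (τ - t)) := by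
    intro s hs
    have hsI : τ - s ∈ Set.Icc (0:ℝ) τ := ⟨by linarith [hs.2], by linarith [hs.1]⟩
    have htI' : τ - t ∈ Set.Icc (0:ℝ) τ := ⟨by linarith, by linarith⟩
    rcases lt_trichotomy s t with hst | hst | hst
    · -- s < t : f s ≥ 0 and g s ≥ g t
      obtain ⟨u, huS, hsu⟩ := exists_lt_of_lt_csSup hSne hst
      have hf : 0 ≤ ξ1 s - ξ2 s := le_trans huS.2 (hdiff_anti hs huS.1 hsu.le)
      have hg : κt (τ - t) ≤ κt (τ - s) := hκt_mono htI' hsI (by linarith)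
      exact mul_nonneg hf (by linarith)
    · simp [hst]
    · -- s > t : f s ≤ 0 and g s ≤ g t
      have hf : ξ1 s - ξ2 s ≤ 0 := by
        by_contra h
        exact absurd (le_csSup hSbdd ⟨hs, le_of_not_ge (fun h' => h (by linarith))⟩)
          (not_le.mpr hst)
      have hg : κt (τ - s) ≤ κt (τ - t) := hκt_mono hsI htI' (by linarith)
      nlinarith
  -- integrability pieces
  set c : ℝ := κt (τ - t) with hc
  have hint1 : IntervalIntegrable (fun s => ξ1 s * κt (τ - s) - ξ2 s * κt (τ - s)) volume 0 τ :=
    hprod1.sub hprod2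
  have hint2 : IntervalIntegrable (fun s => c * ξ1 s - c * ξ2 s) volume 0 τ :=
    (hξ1_int.const_mul c).sub (hξ2_int.const_mul c)
  have key : 0 ≤ ∫ s in (0:ℝ)..τ, (ξ1 s - ξ2 s) * (κt (τ - s) - c) :=
    intervalIntegral.integral_nonneg hτ.le hpt
  have expand : (∫ s in (0:ℝ)..τ, (ξ1 s - ξ2 s) * (κt (τ - s) - c))
      = ((∫ s in (0:ℝ)..τ, ξ1 s * κt (τ - s)) - ∫ s in (0:ℝ)..τ, ξ2 s * κt (τ - s))
        - (c * (∫ s in (0:ℝ)..τ, ξ1 s) - c * ∫ s in (0:ℝ)..τ, ξ2 s) := by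
    rw [← intervalIntegral.integral_sub hprod1 hprod2,
      ← intervalIntegral.integral_const_mul, ← intervalIntegral.integral_const_mul,
      ← intervalIntegral.integral_sub (hξ1_int.const_mul c) (hξ2_int.const_mul c),
      ← intervalIntegral.integral_sub hint1 hint2]
    congr 1; funext s; ring
  have hD : (∫ s in (0:ℝ)..τ, ξ2 s * κt (τ - s)) ≤ ∫ s in (0:ℝ)..τ, ξ1 s * κt (τ - s) := by
    rw [expand, heq] at key; linarith
  have hfirst : 0 ≤ ∫ s in (0:ℝ)..τ, (ξ1 s - ξ2 s) * κt (τ - s) := by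
    have : (∫ s in (0:ℝ)..τ, (ξ1 s - ξ2 s) * κt (τ - s))
        = (∫ s in (0:ℝ)..τ, ξ1 s * κt (τ - s)) - ∫ s in (0:ℝ)..τ, ξ2 s * κt (τ - s) := by
      rw [← intervalIntegral.integral_sub hprod1 hprod2]
      congr 1; funext s; ring
    rw [this]; linarith
  refine ⟨hfirst, ?_⟩
  have hA : 0 ≤ ∫ s in (0:ℝ)..τ, ξ1 s :=
    intervalIntegral.integral_nonneg hτ.le (fun s hs => (hξ1_pos s hs).le)
  have hκτ : 0 ≤ κt τ := by
    have h00 : κt 0 = 0 := by rw [hκt]; simp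
    have := hκt_mono ⟨le_refl 0, hτ.le⟩ ⟨hτ.le, le_refl τ⟩ hτ.le
    linarith
  rw [heq]
  gcongr
  exact mul_nonneg (heq ▸ hA) hκτ
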